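/- Let E ⊆ (IO)* be a finite consistent set of examples and S ⊆ (IO)^ω a specification. If there exists a preMealy machine P such that E ⊆ L(P) and S is P-realizable, then S is PTA(E)-realizable. -/
import Mathlib


open scoped Classical

/-- A preMealy machine over input alphabet `I`, output alphabet `O`, with state type `M`. -/
structure PreMealy (I O M : Type) where
  init : M
  trans : M → I → Option (O × M)

namespace PreMealy

variable {I O M : Type}

/-- One step of a preMealy machine on a pair (input, output): defined iff the transition
on the input is defined and produces exactly the given output. -/
noncomputable def step (P : PreMealy I O M) (m : M) (p : I × O) : Option M :=
  match P.trans m p.1 with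
  | some (o, m') => if o = p.2 then some m' else none
  | none => none

/-- Running a preMealy machine on a finite word of (input, output) pairs. -/
noncomputable def runFrom (P : PreMealy I O M) : M → List (I × O) → Option M
  | m, [] => some m
  | m, p :: u =>
    match P.step m p with
    | some m' => runFrom P m' u
    | none => none

/-- The language `L(P)` of finite words in `(I·O)*` accepted by `P`. -/
def lang (P : PreMealy I O M) : Set (List (I × O)) :=
  { u | (P.runFrom P.init u).isSome }

/-- The ω-language `L_ω(P)`: ω-words all of whose finite prefixes belong to `L(P)`. -/
def omegaLang (P : PreMealy I O M) : Set (ℕ → I × O) :=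
  { w | ∀ n : ℕ, ((List.range n).map w) ∈ P.lang }

/-- `P` is a (complete) Mealy machine when its transition function is total. -/
def Total (P : PreMealy I O M) : Prop :=
  ∀ m i, (P.trans m i).isSome

/-- A hole of `P` is a pair (state, input) on which the transition is undefined. -/
def Hole (P : PreMealy I O M) (m : M) (i : I) : Prop :=
  P.trans m i = none

/-- `Left_p`: the set of finite words reaching state `p` from the initial state. -/
def leftLang (P : PreMealy I O M) (p : M) : Set (List (I × O)) :=
  { u | P.runFrom P.init u = some p }

end PreMealy

/-- `P₁ ⪯ P₂`: `P₁` is a subgraph of `P₂`. -/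
def Subgraph {I O M₁ M₂ : Type} (P₁ : PreMealy I O M₁) (P₂ : PreMealy I O M₂) : Prop :=
  ∃ Φ : M₁ → M₂, Function.Injective Φ ∧ Φ P₁.init = P₂.init ∧
    ∀ p i o q, P₁.trans p i = some (o, q) ↔ P₂.trans (Φ p) i = some (o, Φ q)

/-- `S` is `P`-realizable: some (finite-state, complete) Mealy machine extends `P`
and its ω-language is included in `S ⊆ (I·O)^ω`. -/
def PRealizable {I O M : Type} (P : PreMealy I O M) (S : Set (ℕ → I × O)) : Prop :=
  ∃ (N : Type) (_ : Fintype N) (Mach : PreMealy I O N),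
    Mach.Total ∧ Subgraph P Mach ∧ Mach.omegaLang ⊆ S

/-- Quotient (left derivative) of a set of ω-words by a finite word. -/
def wordQuot {α : Type} (u : List α) (S : Set (ℕ → α)) : Set (ℕ → α) :=
  { v | (fun n => if h : n < u.length then u.get ⟨n, h⟩ else v (n - u.length)) ∈ S }

/-- Interleaving of an ω-word over `I × O` into an ω-word over `Σ = I ⊕ O`. -/
def interleave {I O : Type} (w : ℕ → I × O) : ℕ → I ⊕ O :=
  fun n => if n % 2 = 0 then Sum.inl (w (n / 2)).1 else Sum.inr (w (n / 2)).2

/-- Flattening of a finite word over `I × O` into a word over `Σ = I ⊕ O`. -/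
def flattenWord {I O : Type} (u : List (I × O)) : List (I ⊕ O) :=
  u.flatMap fun p => [Sum.inl p.1, Sum.inr p.2]

/-- `P`-realizability of a specification over `Σ = I ⊕ O`. -/
def PRealizableSigma {I O M : Type} (P : PreMealy I O M) (S : Set (ℕ → I ⊕ O)) : Prop :=
  ∃ (N : Type) (_ : Fintype N) (Mach : PreMealy I O N),
    Mach.Total ∧ Subgraph P Mach ∧ ∀ w ∈ Mach.omegaLang, interleave w ∈ S

/-- Realizability of a specification over `Σ = I ⊕ O` by some Mealy machine. -/
def RealizableSigma (I O : Type) (S : Set (ℕ → I ⊕ O)) : Prop :=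
  ∃ (N : Type) (_ : Fintype N) (Mach : PreMealy I O N),
    Mach.Total ∧ ∀ w ∈ Mach.omegaLang, interleave w ∈ S

/-- A universal coBüchi automaton; `col1 q` means state `q` has color 1. -/
structure UCB (σ Q : Type) where
  init : Set Q
  δ : Q → σ → Set Q
  δ_ne : ∀ q a, (δ q a).Nonempty
  col1 : Q → Prop

namespace UCB

variable {σ Q : Type}

/-- `ρ` is a run of `A` on the ω-word `w`. -/
def Run (A : UCB σ Q) (w : ℕ → σ) (ρ : ℕ → Q) : Prop :=
  ρ 0 ∈ A.init ∧ ∀ n, ρ (n + 1) ∈ A.δ (ρ n) (w n)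

/-- `L^∀_k(A)`: every run visits 1-colored states at most `k` times. -/
def langK (A : UCB σ Q) (k : ℕ) : Set (ℕ → σ) :=
  { w | ∀ ρ : ℕ → Q, A.Run w ρ →
      ∀ s : Finset ℕ, (∀ j ∈ s, A.col1 (ρ j)) → s.card ≤ k }

/-- `L^∀(A)`: every run visits 1-colored states only finitely often. -/
def langForall (A : UCB σ Q) : Set (ℕ → σ) :=
  { w | ∀ ρ : ℕ → Q, A.Run w ρ → { j | A.col1 (ρ j) }.Finite }

/-- A run prefix of `A` on a finite word `p` (only `ρ 0, …, ρ p.length` are relevant). -/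
def RunPrefix (A : UCB σ Q) (p : List σ) (ρ : ℕ → Q) : Prop :=
  ρ 0 ∈ A.init ∧ ∀ (j : ℕ) (h : j < p.length), ρ (j + 1) ∈ A.δ (ρ j) (p.get ⟨j, h⟩)

/-- The set of states reachable from a set of states while reading a finite word. -/
def postSet (A : UCB σ Q) : Set Q → List σ → Set Q
  | S, [] => S
  | S, a :: u => postSet A (⋃ q ∈ S, A.δ q a) u

end UCB

/-- The set `CF(A,k)` of `k`-counting functions, as integer-valued functions. -/
def CFset (Q : Type) (k : ℕ) : Set (Q → ℤ) :=
  { f | ∀ q, -1 ≤ f q ∧ f q ≤ (k : ℤ) + 1 }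

/-- The transition function `δ^D` of the determinization `D(A,k)` on counting functions. -/
noncomputable def detTransFun {σ Q : Type} [Fintype Q] (A : UCB σ Q) (k : ℕ)
    (f : Q → ℤ) (a : σ) : Q → ℤ := fun q =>
  let pred : Finset Q := Finset.univ.filter fun q' => q ∈ A.δ q' a ∧ 0 ≤ f q'
  if h : pred.Nonempty then
    min (pred.sup' h f + (if A.col1 q then 1 else 0)) ((k : ℤ) + 1)
  else -1

/-- The (unique) run of `D(A,k)` on an ω-word `w`, starting from `f`. -/
noncomputable def detRun {σ Q : Type} [Fintype Q] (A : UCB σ Q) (k : ℕ)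
    (f : Q → ℤ) (w : ℕ → σ) : ℕ → Q → ℤ
  | 0 => f
  | n + 1 => detTransFun A k (detRun A k f w n) (w n)

/-- The state of `D(A,k)` reached from `f` after reading a finite word. -/
noncomputable def detPostW {σ Q : Type} [Fintype Q] (A : UCB σ Q) (k : ℕ) :
    (Q → ℤ) → List σ → Q → ℤ
  | f, [] => f
  | f, a :: u => detPostW A k (detTransFun A k f a) u

/-- The initial counting function `f₀` of `D(A,k)`. -/
noncomputable def initCF {σ Q : Type} (A : UCB σ Q) : Q → ℤ := fun q =>
  if q ∈ A.init then (if A.col1 q then 1 else 0) else -1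

/-- `L(D(A,k)[f])`: ω-words whose run of `D(A,k)` from `f` never visits an unsafe
counting function (one taking the value `k+1`). -/
def langD {σ Q : Type} [Fintype Q] (A : UCB σ Q) (k : ℕ) (f : Q → ℤ) :
    Set (ℕ → σ) :=
  { w | ∀ n, ¬ ∃ q, detRun A k f w n q = (k : ℤ) + 1 }

/-- A complete deterministic safety automaton: the set `bad` of unsafe states is a trap. -/
structure DetSafety (σ Q : Type) where
  start : Q
  δ : Q → σ → Q
  bad : Set Q
  trap : ∀ q ∈ bad, ∀ a, δ q a ∈ bad

namespace DetSafety

variable {σ Q : Type}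

/-- State reached after reading a finite word. -/
def postW (A : DetSafety σ Q) : Q → List σ → Q
  | q, [] => q
  | q, a :: u => postW A (A.δ q a) u

/-- The run of a deterministic automaton on an ω-word. -/
def runOn (A : DetSafety σ Q) (w : ℕ → σ) : ℕ → Q
  | 0 => A.start
  | n + 1 => A.δ (runOn A w n) (w n)

/-- The (safety) ω-language: the run never enters an unsafe state. -/
def omegaLang (A : DetSafety σ Q) : Set (ℕ → σ) :=
  { w | ∀ n, runOn A w n ∉ A.bad }

end DetSafety

/-- A complete deterministic automaton (no acceptance condition). -/
structure DetAuto (σ Q : Type) where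
  start : Q
  δ : Q → σ → Q

/-- State reached after reading a finite word. -/
def DetAuto.postW {σ Q : Type} (A : DetAuto σ Q) : Q → List σ → Q
  | q, [] => q
  | q, a :: u => DetAuto.postW A (A.δ q a) u

/-- Domination order between collections: every element of `A` is below some element of `B`. -/
def acLE {α : Type} (r : α → α → Prop) (A B : Set α) : Prop :=
  ∀ x ∈ A, ∃ y ∈ B, r x y

/-- Downward closure of a collection of subsets of `Y`. -/
def dcl {Y : Type} (A : Set (Set Y)) : Set (Set Y) :=
  { X | ∃ X' ∈ A, X ⊆ X' }

/-- The merged relation `U(∼, p)` for a non-congruent point with successors `s, s'`. -/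
def Umerge {M : Type} (r : M → M → Prop) (s s' : M) : M → M → Prop :=
  fun y y' => r y y' ∨ (r y s ∧ r y' s') ∨ (r y' s ∧ r y s')

/-- Prefix closure of a set of finite words over `I × O`. -/
def prefsE {I O : Type} (E : Set (List (I × O))) : Set (List (I × O)) :=
  { u | ∃ e ∈ E, u <+: e }

/-- Consistency of a set of examples: the output is uniquely determined by each
prefix ending with an input. -/
def ConsistentE {I O : Type} (E : Set (List (I × O))) : Prop :=
  ∀ (u : List (I × O)) (i : I) (o o' : O),
    (u ++ [(i, o)]) ∈ prefsE E → (u ++ [(i, o')]) ∈ prefsE E → o = o'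

/-- The prefix-tree acceptor `PTA(E)`: states are the prefixes of `E` (together with ε). -/
noncomputable def PTA {I O : Type} (E : Set (List (I × O))) :
    PreMealy I O (↥(insert ([] : List (I × O)) (prefsE E))) where
  init := ⟨[], Set.mem_insert _ _⟩
  trans := fun u i =>
    if h : ∃ o : O, (u.1 ++ [(i, o)]) ∈ prefsE E then
      some (h.choose, ⟨u.1 ++ [(i, h.choose)], Set.mem_insert_of_mem _ h.choose_spec⟩)
    else none

/-- The fixpoint labelling `F*` of the states of a preMealy machine by counting functions. -/
noncomputable def Fstar {I O M Q : Type} [Fintype Q] (P : PreMealy I O M)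
    (A : UCB (I ⊕ O) Q) (k : ℕ) (m : M) : Q → ℤ := fun q =>
  sSup (insert (-1 : ℤ)
    { z | ∃ u ∈ P.leftLang m, detPostW A k (initCF A) (flattenWord u) q = z })

/-! ### Auxiliary lemmas for `stmt18` -/

theorem PreMealy.runFrom_append' {I O M : Type} (P : PreMealy I O M)
    (u v : List (I × O)) : ∀ m, P.runFrom m (u ++ v) =
      (P.runFrom m u).bind (fun m' => P.runFrom m' v) := by
  induction u with
  | nil => intro m; simp [PreMealy.runFrom]
  | cons p u ih =>
    intro m
    simp only [List.cons_append, PreMealy.runFrom]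
    cases h : P.step m p <;> simp [h, ih]

theorem PreMealy.step_map {I O M₁ M₂ : Type} {P₁ : PreMealy I O M₁}
    {P₂ : PreMealy I O M₂} {Φ : M₁ → M₂}
    (hΦ : ∀ p i o q, P₁.trans p i = some (o, q) ↔ P₂.trans (Φ p) i = some (o, Φ q))
    {m m' : M₁} {p : I × O} (h : P₁.step m p = some m') :
    P₂.step (Φ m) p = some (Φ m') := by
  unfold PreMealy.step at h ⊢
  cases ht : P₁.trans m p.1 with
  | none => rw [ht] at h; simp at h
  | some oq =>
    obtain ⟨o, q⟩ := oq
    rw [ht] at h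
    by_cases ho : o = p.2
    · simp only [ho, if_true] at h
      cases h
      rw [(hΦ m p.1 o m').1 ht]
      simp [ho]
    · simp [ho] at h

theorem PreMealy.runFrom_map {I O M₁ M₂ : Type} {P₁ : PreMealy I O M₁}
    {P₂ : PreMealy I O M₂} {Φ : M₁ → M₂}
    (hΦ : ∀ p i o q, P₁.trans p i = some (o, q) ↔ P₂.trans (Φ p) i = some (o, Φ q))
    (u : List (I × O)) : ∀ m m', P₁.runFrom m u = some m' →
      P₂.runFrom (Φ m) u = some (Φ m') := by
  induction u with
  | nil => intro m m' h; simp [PreMealy.runFrom] at h ⊢; exact congrArg Φ h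
  | cons p u ih =>
    intro m m' h
    simp only [PreMealy.runFrom] at h ⊢
    cases hs : P₁.step m p with
    | none => rw [hs] at h; simp at h
    | some m₁ =>
      rw [hs] at h
      rw [PreMealy.step_map hΦ hs]
      exact ih m₁ m' h

theorem PreMealy.step_eq_some_iff {I O M : Type} {P : PreMealy I O M}
    {m m' : M} {p : I × O} :
    P.step m p = some m' ↔ P.trans m p.1 = some (p.2, m') := by
  unfold PreMealy.step
  cases ht : P.trans m p.1 with
  | none => simp
  | some oq =>
    obtain ⟨o, q⟩ := oq
    constructor
    · intro h
      dsimp only at h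
      split_ifs at h with ho
      cases h; rw [ho]
    · intro h
      simp only [Option.some.injEq, Prod.mk.injEq] at h
      obtain ⟨rfl, rfl⟩ := h
      simp

theorem PreMealy.runFrom_mono {I O M₁ M₂ : Type} {P₁ : PreMealy I O M₁}
    {P₂ : PreMealy I O M₂} {Φ : M₁ → M₂}
    (hstep : ∀ m m' p, P₁.step m p = some m' → P₂.step (Φ m) p = some (Φ m'))
    (u : List (I × O)) : ∀ m m', P₁.runFrom m u = some m' →
      P₂.runFrom (Φ m) u = some (Φ m') := by
  induction u with
  | nil => intro m m' h; simp [PreMealy.runFrom] at h ⊢; exact congrArg Φ h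
  | cons p u ih =>
    intro m m' h
    simp only [PreMealy.runFrom] at h ⊢
    cases hs : P₁.step m p with
    | none => rw [hs] at h; simp at h
    | some m₁ =>
      rw [hs] at h
      rw [hstep m m₁ p hs]
      exact ih m₁ m' h

/-- Transition function of the extension of a preMealy machine `Pta` by a complete
machine `Mach`, along a map `f` from states of `Pta` to states of `Mach`. -/
noncomputable def extTrans {I O M N : Type} (Pta : PreMealy I O M) (Mach : PreMealy I O N)
    (f : M → N) : M ⊕ N → I → Option (O × (M ⊕ N))
  | Sum.inl u, i =>
    match Pta.trans u i with
    | some (o, u') => some (o, Sum.inl u')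
    | none => (Mach.trans (f u) i).map (fun om => (om.1, Sum.inr om.2))
  | Sum.inr m, i => (Mach.trans m i).map (fun om => (om.1, Sum.inr om.2))

noncomputable def extMach {I O M N : Type} (Pta : PreMealy I O M) (Mach : PreMealy I O N)
    (f : M → N) : PreMealy I O (M ⊕ N) :=
  ⟨Sum.inl Pta.init, extTrans Pta Mach f⟩

theorem extMach_trans {I O M N : Type} (Pta : PreMealy I O M) (Mach : PreMealy I O N)
    (f : M → N) : (extMach Pta Mach f).trans = extTrans Pta Mach f := rfl

theorem extTrans_inl_some {I O M N : Type} {Pta : PreMealy I O M} {Mach : PreMealy I O N}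
    {f : M → N} {u : M} {i : I} {o : O} {u' : M} (h : Pta.trans u i = some (o, u')) :
    extTrans Pta Mach f (Sum.inl u) i = some (o, Sum.inl u') := by
  simp only [extTrans, h]

theorem extTrans_inl_none {I O M N : Type} {Pta : PreMealy I O M} {Mach : PreMealy I O N}
    {f : M → N} {u : M} {i : I} (h : Pta.trans u i = none) :
    extTrans Pta Mach f (Sum.inl u) i
      = (Mach.trans (f u) i).map (fun om => (om.1, Sum.inr om.2)) := by
  simp only [extTrans, h]

theorem extTrans_inr {I O M N : Type} (Pta : PreMealy I O M) (Mach : PreMealy I O N)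
    (f : M → N) (m : N) (i : I) :
    extTrans Pta Mach f (Sum.inr m) i
      = (Mach.trans m i).map (fun om => (om.1, Sum.inr om.2)) := rfl

theorem extMach_total {I O M N : Type} {Pta : PreMealy I O M} {Mach : PreMealy I O N}
    {f : M → N} (htot : Mach.Total) : (extMach Pta Mach f).Total := by
  intro s i
  rw [extMach_trans]
  cases s with
  | inl u =>
    cases ht : Pta.trans u i with
    | none =>
      rw [extTrans_inl_none ht]
      obtain ⟨om, hm⟩ := Option.isSome_iff_exists.1 (htot (f u) i)
      rw [hm]
      rfl
    | some oq =>
      obtain ⟨o, u'⟩ := oq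
      rw [extTrans_inl_some ht]
      rfl
  | inr m =>
    rw [extTrans_inr]
    obtain ⟨om, hm⟩ := Option.isSome_iff_exists.1 (htot m i)
    rw [hm]
    rfl

theorem extMach_subgraph {I O M N : Type} {Pta : PreMealy I O M} {Mach : PreMealy I O N}
    {f : M → N} : Subgraph Pta (extMach Pta Mach f) := by
  refine ⟨Sum.inl, Sum.inl_injective, rfl, fun p i o q => ?_⟩
  rw [extMach_trans]
  constructor
  · intro h; exact extTrans_inl_some h
  · intro h
    cases ht : Pta.trans p i with
    | none =>
      rw [extTrans_inl_none ht] at h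
      cases hm : Mach.trans (f p) i with
      | none => rw [hm] at h; simp at h
      | some om => rw [hm] at h; simp at h
    | some oq =>
      obtain ⟨o', q'⟩ := oq
      rw [extTrans_inl_some ht] at h
      simp only [Option.some.injEq, Prod.mk.injEq, Sum.inl.injEq] at h
      obtain ⟨rfl, rfl⟩ := h
      rfl

theorem extMach_step {I O M N : Type} {Pta : PreMealy I O M} {Mach : PreMealy I O N}
    {f : M → N}
    (Hc : ∀ u i o u', Pta.trans u i = some (o, u') → Mach.trans (f u) i = some (o, f u'))
    {s s' : M ⊕ N} {p : I × O} (h : (extMach Pta Mach f).step s p = some s') :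
    Mach.step (Sum.elim f id s) p = some (Sum.elim f id s') := by
  rw [PreMealy.step_eq_some_iff] at h ⊢
  rw [extMach_trans] at h
  cases s with
  | inl u =>
    cases ht : Pta.trans u p.1 with
    | some oq =>
      obtain ⟨o, u'⟩ := oq
      rw [extTrans_inl_some ht] at h
      simp only [Option.some.injEq, Prod.mk.injEq] at h
      obtain ⟨rfl, rfl⟩ := h
      exact Hc u p.1 p.2 u' ht
    | none =>
      rw [extTrans_inl_none ht] at h
      cases hm : Mach.trans (f u) p.1 with
      | none => rw [hm] at h; simp at h
      | some om =>
        obtain ⟨o2, m2⟩ := om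
        rw [hm] at h
        simp only [Option.map_some, Option.some.injEq, Prod.mk.injEq] at h
        obtain ⟨rfl, rfl⟩ := h
        exact hm
  | inr m =>
    rw [extTrans_inr] at h
    cases hm : Mach.trans m p.1 with
    | none => rw [hm] at h; simp at h
    | some om =>
      obtain ⟨o2, m2⟩ := om
      rw [hm] at h
      simp only [Option.map_some, Option.some.injEq, Prod.mk.injEq] at h
      obtain ⟨rfl, rfl⟩ := h
      exact hm

theorem extMach_omega {I O M N : Type} {Pta : PreMealy I O M} {Mach : PreMealy I O N}
    {f : M → N} (Hi : f Pta.init = Mach.init)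
    (Hc : ∀ u i o u', Pta.trans u i = some (o, u') → Mach.trans (f u) i = some (o, f u')) :
    (extMach Pta Mach f).omegaLang ⊆ Mach.omegaLang := by
  intro w hw n
  have h1 := hw n
  simp only [PreMealy.lang, Set.mem_setOf_eq] at h1 ⊢
  obtain ⟨s', hs'⟩ := Option.isSome_iff_exists.1 h1
  have := PreMealy.runFrom_mono (Φ := Sum.elim f id)
    (fun m m' p h => extMach_step Hc h) _ _ _ hs'
  have hinit : Sum.elim f id ((extMach Pta Mach f).init) = Mach.init := Hi
  rw [hinit] at this
  rw [this]
  rfl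

/-- if some preMealy machine `P` satisfies `E ⊆ L(P)` and `S` is
`P`-realizable, then `S` is `PTA(E)`-realizable. -/
theorem stmt18 {I O : Type} [Fintype I] [Nonempty I] [Fintype O] [Nonempty O]
    (E : Set (List (I × O))) (hfin : E.Finite) (hcons : ConsistentE E)
    (S : Set (ℕ → I × O))
    (h : ∃ (M : Type) (_ : Fintype M) (P : PreMealy I O M),
      E ⊆ P.lang ∧ PRealizable P S) :
    PRealizable (PTA E) S := by
  obtain ⟨M, _instM, P, hEP, N, instN, Mach, htot, ⟨Φ, hΦinj, hΦinit, hΦtr⟩, hsub⟩ := h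
  -- every PTA state, as a word, can be run in Mach
  have hlang : ∀ u ∈ insert ([] : List (I × O)) (prefsE E),
      (Mach.runFrom Mach.init u).isSome := by
    intro u hu
    rcases hu with rfl | ⟨e, heE, v, rfl⟩
    · simp [PreMealy.runFrom]
    · have he : (P.runFrom P.init (u ++ v)).isSome := hEP heE
      obtain ⟨p, hp⟩ := Option.isSome_iff_exists.1 he
      have hm : Mach.runFrom (Φ P.init) (u ++ v) = some (Φ p) :=
        PreMealy.runFrom_map hΦtr (u ++ v) _ _ hp
      rw [hΦinit, PreMealy.runFrom_append'] at hm
      cases hr : Mach.runFrom Mach.init u with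
      | none => rw [hr] at hm; simp at hm
      | some _ => rfl
  have hfinPS : (insert ([] : List (I × O)) (prefsE E)).Finite := by
    refine Set.Finite.insert _ ?_
    refine (Set.Finite.biUnion hfin (fun e _ => e.inits.finite_toSet)).subset ?_
    rintro u ⟨e, he, hp⟩
    exact Set.mem_biUnion he ((List.mem_inits _ _).2 hp)
  haveI : Fintype (↥(insert ([] : List (I × O)) (prefsE E))) := hfinPS.fintype
  have hrun0 : ∀ u : ↥(insert ([] : List (I × O)) (prefsE E)),
      ∃ m : N, Mach.runFrom Mach.init u.1 = some m := by
    intro u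
    exact Option.isSome_iff_exists.1 (hlang u.1 u.2)
  choose mst hrun using hrun0
  have Hi : mst (PTA E).init = Mach.init := by
    have h0 : Mach.runFrom Mach.init ([] : List (I × O)) = some Mach.init := rfl
    have h2 := hrun (PTA E).init
    rw [show ((PTA E).init : ↥(insert ([] : List (I × O)) (prefsE E))).1
        = ([] : List (I × O)) from rfl, h0] at h2
    exact (Option.some.inj h2).symm
  have Hc : ∀ u i o u', (PTA E).trans u i = some (o, u') →
      Mach.trans (mst u) i = some (o, mst u') := by
    intro u i o u' h
    have h2 : (@dite _ (∃ o : O, (u.1 ++ [(i, o)]) ∈ prefsE E) (Classical.propDecidable _)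
        (fun hx => some (hx.choose, (⟨u.1 ++ [(i, hx.choose)],
          Set.mem_insert_of_mem _ hx.choose_spec⟩
            : ↥(insert ([] : List (I × O)) (prefsE E)))))
        (fun _ => none)) = some (o, u') := h
    clear h
    split_ifs at h2 with hex
    · simp only [Option.some.injEq, Prod.mk.injEq] at h2
      obtain ⟨ho, hu'⟩ := h2
      have hval : (u' : List (I × O)) = u.1 ++ [(i, o)] := by
        rw [← hu']
        show u.1 ++ [(i, hex.choose)] = u.1 ++ [(i, o)]
        rw [ho]
      have h1 := hrun u'
      rw [hval, PreMealy.runFrom_append', hrun u] at h1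
      rw [Option.bind_some] at h1
      have hstep : Mach.step (mst u) (i, o) = some (mst u') := by
        simp only [PreMealy.runFrom] at h1
        cases hs : Mach.step (mst u) (i, o) with
        | none => rw [hs] at h1; simp at h1
        | some m2 => rw [hs] at h1; exact h1
      exact PreMealy.step_eq_some_iff.1 hstep
  exact ⟨(↥(insert ([] : List (I × O)) (prefsE E))) ⊕ N, inferInstance,
    extMach (PTA E) Mach mst,
    extMach_total htot, extMach_subgraph, fun w hw => hsub (extMach_omega Hi Hc hw)⟩
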